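/- arXiv:1602.07675 — 3 statements merged into one kernel-verified Lean document; each statement's English description precedes it below -/
import Mathlib

section
/- If G is a finite simple graph with no universal vertex (i.e. no vertex adjacent to all other vertices), then η(G ∨ K₁) = η(G), where G ∨ K₁ is the graph obtained from G by adding a single new vertex adjacent to all vertices of G. -/
open Classical in
/-- Sum of the labels `f` over the open neighborhood of `v` in `G`. -/
noncomputable def nbrSum {V : Type*} [Fintype V] (G : SimpleGraph V) (f : V → ℕ) (v : V) : ℕ :=
  ∑ w ∈ Finset.univ.filter (fun w => G.Adj v w), f w

open Classical in
/-- The degree of `v` in `G`. -/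
noncomputable def deg {V : Type*} [Fintype V] (G : SimpleGraph V) (v : V) : ℕ :=
  (Finset.univ.filter (fun w => G.Adj v w)).card

/-- `f : V → {1,…,k}` is an additive `k`-coloring of `G`: labels lie in `{1,…,k}` and
adjacent vertices get distinct open-neighborhood sums. -/
def IsAdditiveColoring {V : Type*} [Fintype V] (G : SimpleGraph V) (k : ℕ) (f : V → ℕ) : Prop :=
  (∀ v, 1 ≤ f v ∧ f v ≤ k) ∧ ∀ u v, G.Adj u v → nbrSum G f u ≠ nbrSum G f v

/-- The additive chromatic number `η(G)`: the least `k` admitting an additive `k`-coloring. -/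
noncomputable def eta {V : Type*} [Fintype V] (G : SimpleGraph V) : ℕ :=
  sInf {k | ∃ f : V → ℕ, IsAdditiveColoring G k f}

/-- The join `G ∨ K_q` of `G` with the complete graph on `q` vertices. -/
def joinK {α : Type*} (G : SimpleGraph α) (q : ℕ) : SimpleGraph (α ⊕ Fin q) where
  Adj x y :=
    match x, y with
    | Sum.inl u, Sum.inl v => G.Adj u v
    | Sum.inr i, Sum.inr j => i ≠ j
    | Sum.inl _, Sum.inr _ => True
    | Sum.inr _, Sum.inl _ => True
  symm := by
    constructor
    rintro (u | i) (v | j) h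
    · exact G.adj_symm h
    · trivial
    · trivial
    · exact Ne.symm h
  loopless := by
    constructor
    rintro (u | i) h
    · exact G.irrefl h
    · exact h rfl

open Classical

lemma nbrSum_inl {α : Type*} [Fintype α] (G : SimpleGraph α) (g : α ⊕ Fin 1 → ℕ) (u : α) :
    nbrSum (joinK G 1) g (Sum.inl u) = nbrSum G (fun v => g (Sum.inl v)) u + g (Sum.inr 0) := by
  classical
  unfold nbrSum
  rw [Finset.sum_filter, Finset.sum_filter, Fintype.sum_sum_type]
  simp [joinK]
  refine Finset.sum_congr rfl (fun x _ => ?_)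
  split_ifs <;> simp_all [joinK]

lemma nbrSum_inr {α : Type*} [Fintype α] (G : SimpleGraph α) (g : α ⊕ Fin 1 → ℕ) (i : Fin 1) :
    nbrSum (joinK G 1) g (Sum.inr i) = ∑ v, g (Sum.inl v) := by
  classical
  unfold nbrSum
  rw [Finset.sum_filter, Fintype.sum_sum_type]
  have : ∀ j : Fin 1, ¬ (joinK G 1).Adj (Sum.inr i) (Sum.inr j) := by
    intro j h
    exact h (Subsingleton.elim i j)
  simp [joinK, Subsingleton.elim i 0]

lemma key_lt {α : Type*} [Fintype α] (G : SimpleGraph α)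
    (huniv : ¬ ∃ v, ∀ w, w ≠ v → G.Adj v w) (f : α → ℕ) (hf1 : ∀ v, 1 ≤ f v) (u : α) :
    nbrSum G f u + 1 < ∑ v, f v := by
  classical
  push_neg at huniv
  obtain ⟨w, hwu, hnadj⟩ := huniv u
  have hu : u ∉ Finset.univ.filter (fun x => G.Adj u x) := by simp [G.irrefl]
  have hw : w ∉ Finset.univ.filter (fun x => G.Adj u x) := by simp [hnadj]
  have hu2 : u ∉ insert w (Finset.univ.filter (fun x => G.Adj u x)) := by
    simp [hu, Ne.symm hwu]
  have hsub : insert u (insert w (Finset.univ.filter (fun x => G.Adj u x))) ⊆ Finset.univ :=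
    Finset.subset_univ _
  have hsum : f u + (f w + ∑ x ∈ Finset.univ.filter (fun x => G.Adj u x), f x) ≤ ∑ v, f v := by
    rw [← Finset.sum_insert hw, ← Finset.sum_insert hu2]
    exact Finset.sum_le_sum_of_subset hsub
  have := hf1 u
  have := hf1 w
  unfold nbrSum
  omega

/-- If `G` has no universal vertex, then `η(G ∨ K₁) = η(G)`. -/
theorem eta_join_K1 {α : Type*} [Fintype α] [Nonempty α] (G : SimpleGraph α)
    (huniv : ¬ ∃ v, ∀ w, w ≠ v → G.Adj v w) :
    eta (joinK G 1) = eta G := by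
  classical
  unfold eta
  congr 1
  ext k
  simp only [Set.mem_setOf_eq]
  constructor
  · rintro ⟨g, hg1, hg2⟩
    refine ⟨fun v => g (Sum.inl v), fun v => hg1 (Sum.inl v), ?_⟩
    intro u v huv h
    exact hg2 (Sum.inl u) (Sum.inl v) huv (by rw [nbrSum_inl, nbrSum_inl, h])
  · rintro ⟨f, hf1, hf2⟩
    have hk : 1 ≤ k := le_trans (hf1 (Classical.arbitrary α)).1 (hf1 _).2
    refine ⟨Sum.elim f (fun _ => 1), ?_, ?_⟩
    · rintro (u | i)
      · exact hf1 u
      · exact ⟨le_refl 1, hk⟩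
    · have hlt : ∀ u : α, nbrSum G (fun v => Sum.elim f (fun _ : Fin 1 => 1) (Sum.inl v)) u
          + Sum.elim f (fun _ : Fin 1 => 1) (Sum.inr 0) < ∑ v, f v := by
        intro u
        simpa using key_lt G huniv f (fun v => (hf1 v).1) u
      rintro (u | i) (v | j) h
      · intro heq
        have h1 := nbrSum_inl G (Sum.elim f (fun _ => 1)) u
        have h2 := nbrSum_inl G (Sum.elim f (fun _ => 1)) v
        apply hf2 u v h
        have : nbrSum G (fun x => Sum.elim f (fun _ : Fin 1 => 1) (Sum.inl x)) u
            = nbrSum G (fun x => Sum.elim f (fun _ : Fin 1 => 1) (Sum.inl x)) v := by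
          have := h1 ▸ h2 ▸ heq
          omega
        simpa using this
      · rw [nbrSum_inl, nbrSum_inr]
        have := hlt u
        simp only [Sum.elim_inl] at *
        omega
      · rw [nbrSum_inl, nbrSum_inr]
        have := hlt v
        simp only [Sum.elim_inl] at *
        omega
      · exact absurd (Subsingleton.elim i j) h
end

section
/- For every integer n ≥ 3, the fan F_n = P_{n+1} ∨ K₁ satisfies η(F_n) = 2. -/
open Classical in
lemma nbrSum_eq_sum_ite {V : Type*} [Fintype V] (G : SimpleGraph V) (f : V → ℕ) (v : V) :
    nbrSum G f v = ∑ w : V, if G.Adj v w then f w else 0 := by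
  rw [nbrSum, Finset.sum_filter]

lemma nbrSum_inl_s9 (n : ℕ) (f : Fin (n+1) ⊕ Fin 1 → ℕ) (i : Fin (n+1)) :
    nbrSum (joinK (SimpleGraph.pathGraph (n+1)) 1) f (Sum.inl i) =
      (if h : 0 < i.val then f (Sum.inl ⟨i.val - 1, by omega⟩) else 0)
      + (if h : i.val < n then f (Sum.inl ⟨i.val + 1, by omega⟩) else 0)
      + f (Sum.inr 0) := by
  classical
  rw [nbrSum_eq_sum_ite, Fintype.sum_sum_type]
  have hinr : ∑ b : Fin 1, (if (joinK (SimpleGraph.pathGraph (n+1)) 1).Adj (Sum.inl i) (Sum.inr b) then f (Sum.inr b) else 0) = f (Sum.inr 0) := by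
    simp [joinK]
  rw [hinr]
  congr 1
  have hadj : ∀ j : Fin (n+1), (joinK (SimpleGraph.pathGraph (n+1)) 1).Adj (Sum.inl i) (Sum.inl j)
      ↔ (i.val + 1 = j.val ∨ j.val + 1 = i.val) := by
    intro j
    exact SimpleGraph.pathGraph_adj
  have hsplit : ∀ j : Fin (n+1),
      (if (joinK (SimpleGraph.pathGraph (n+1)) 1).Adj (Sum.inl i) (Sum.inl j) then f (Sum.inl j) else 0)
      = (if j.val + 1 = i.val then f (Sum.inl j) else 0) + (if i.val + 1 = j.val then f (Sum.inl j) else 0) := by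
    intro j
    rw [if_congr (hadj j) rfl rfl]
    by_cases h1 : i.val + 1 = j.val <;> by_cases h2 : j.val + 1 = i.val <;>
      simp [h1, h2] <;> omega
  rw [Finset.sum_congr rfl (fun j _ => hsplit j), Finset.sum_add_distrib]
  congr 1
  · by_cases h : 0 < i.val
    · rw [dif_pos h]
      have : ∀ j : Fin (n+1), (j.val + 1 = i.val) ↔ j = ⟨i.val - 1, by omega⟩ := by
        intro j; rw [Fin.ext_iff]; simp; omega
      rw [Finset.sum_congr rfl (fun j _ => if_congr (this j) rfl rfl)]
      exact Finset.sum_ite_eq' _ _ _ |>.trans (by simp)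
    · rw [dif_neg h]
      apply Finset.sum_eq_zero
      intro j _
      rw [if_neg]; omega
  · by_cases h : i.val < n
    · rw [dif_pos h]
      have : ∀ j : Fin (n+1), (i.val + 1 = j.val) ↔ j = ⟨i.val + 1, by omega⟩ := by
        intro j; rw [Fin.ext_iff]; simp; omega
      rw [Finset.sum_congr rfl (fun j _ => if_congr (this j) rfl rfl)]
      exact Finset.sum_ite_eq' _ _ _ |>.trans (by simp)
    · rw [dif_neg h]
      apply Finset.sum_eq_zero
      intro j _
      rw [if_neg]; omega

lemma nbrSum_inr_s9 (n : ℕ) (f : Fin (n+1) ⊕ Fin 1 → ℕ) (k : Fin 1) :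
    nbrSum (joinK (SimpleGraph.pathGraph (n+1)) 1) f (Sum.inr k) =
      ∑ j : Fin (n+1), f (Sum.inl j) := by
  classical
  rw [nbrSum_eq_sum_ite, Fintype.sum_sum_type]
  have h1 : ∑ b : Fin 1, (if (joinK (SimpleGraph.pathGraph (n+1)) 1).Adj (Sum.inr k) (Sum.inr b) then f (Sum.inr b) else 0) = 0 := by
    apply Finset.sum_eq_zero
    intro b _
    rw [if_neg]
    show ¬ (k ≠ b)
    simp [Subsingleton.elim k b]
  have h2 : ∀ j : Fin (n+1), (if (joinK (SimpleGraph.pathGraph (n+1)) 1).Adj (Sum.inr k) (Sum.inl j) then f (Sum.inl j) else 0) = f (Sum.inl j) := by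
    intro j; rw [if_pos]; trivial
  rw [h1, Finset.sum_congr rfl (fun j _ => h2 j)]
  simp

/-- the path label: 2 at positions ≡ r (mod 4), else 1, where r depends on n mod 4. -/
def gg (n i : ℕ) : ℕ := if i % 4 = (if n % 4 = 3 then 3 else 2) then 2 else 1

/-- the neighbor-sum along the path (without the hub contribution). -/
def Aa (n i : ℕ) : ℕ :=
  (if 0 < i then gg n (i-1) else 0) + (if i < n then gg n (i+1) else 0)

lemma gg_bounds (n i : ℕ) : 1 ≤ gg n i ∧ gg n i ≤ 2 := by
  unfold gg; split_ifs <;> omega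

lemma Aa_ne (n i : ℕ) (hn : 3 ≤ n) (hi : i < n) : Aa n i ≠ Aa n (i+1) := by
  unfold Aa gg
  split_ifs <;> omega

lemma Aa_le (n i : ℕ) : Aa n i ≤ 3 := by
  unfold Aa gg
  split_ifs <;> omega


/-- For `n ≥ 3`, the fan `F_n = P_{n+1} ∨ K₁` satisfies `η(F_n) = 2`. -/
theorem eta_fan (n : ℕ) (hn : 3 ≤ n) :
    eta (joinK (SimpleGraph.pathGraph (n + 1)) 1) = 2 := by
  set G := joinK (SimpleGraph.pathGraph (n + 1)) 1 with hG
  set F : Fin (n+1) ⊕ Fin 1 → ℕ := Sum.elim (fun j => gg n j.val) (fun _ => 1) with hF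
  -- neighbor sums of the explicit coloring
  have hFl : ∀ i : Fin (n+1), nbrSum G F (Sum.inl i) = Aa n i.val + 1 := by
    intro i
    rw [nbrSum_inl_s9]
    simp only [hF, Sum.elim_inl, Sum.elim_inr, dite_eq_ite]
    rfl
  have hFr : ∀ k : Fin 1, n + 2 ≤ nbrSum G F (Sum.inr k) := by
    intro k
    rw [nbrSum_inr_s9]
    simp only [hF, Sum.elim_inl]
    have h1 : ∀ j : Fin (n+1), gg n j.val = 1 + (if j.val % 4 = (if n % 4 = 3 then 3 else 2) then 1 else 0) := by
      intro j; unfold gg; split_ifs <;> rfl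
    rw [Finset.sum_congr rfl (fun j _ => h1 j), Finset.sum_add_distrib]
    have hcard : ∑ _j : Fin (n+1), 1 = n + 1 := by simp
    rw [hcard]
    have hrle : (if n % 4 = 3 then 3 else 2) < n + 1 := by split_ifs <;> omega
    have hsingle : (1 : ℕ) ≤ ∑ j : Fin (n+1), (if j.val % 4 = (if n % 4 = 3 then 3 else 2) then 1 else 0) := by
      have := Finset.single_le_sum (f := fun j : Fin (n+1) => (if j.val % 4 = (if n % 4 = 3 then 3 else 2) then 1 else 0))
        (fun j _ => Nat.zero_le _) (Finset.mem_univ (⟨(if n % 4 = 3 then 3 else 2), hrle⟩ : Fin (n+1)))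
      have hterm : (if ((⟨(if n % 4 = 3 then 3 else 2), hrle⟩ : Fin (n+1)) : Fin (n+1)).val % 4 = (if n % 4 = 3 then 3 else 2) then (1:ℕ) else 0) = 1 := by
        rw [if_pos]
        show (if n % 4 = 3 then 3 else 2) % 4 = (if n % 4 = 3 then 3 else 2)
        split_ifs <;> rfl
      exact le_trans (le_of_eq hterm.symm) this
    omega
  have hmem : (2 : ℕ) ∈ {k | ∃ f : Fin (n+1) ⊕ Fin 1 → ℕ, IsAdditiveColoring G k f} := by
    refine ⟨F, ?_, ?_⟩
    · rintro (j | k)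
      · simpa [hF] using gg_bounds n j.val
      · simp [hF]
    · rintro (u | k) (v | k') hadj
      · -- path-path edge
        have hpq : u.val + 1 = v.val ∨ v.val + 1 = u.val := SimpleGraph.pathGraph_adj.mp hadj
        rw [hFl, hFl]
        rcases hpq with h | h
        · have : v.val = u.val + 1 := h.symm
          rw [this]
          have hu : u.val < n := by have := v.isLt; omega
          exact fun hc => Aa_ne n u.val hn hu (by omega)
        · have : u.val = v.val + 1 := h.symm
          rw [this]
          have hv : v.val < n := by have := u.isLt; omega
          exact fun hc => (Aa_ne n v.val hn hv (by omega)).elim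
      · rw [hFl]
        have h1 := hFr k'
        have h2 := Aa_le n u.val
        omega
      · rw [hFl]
        have h1 := hFr k
        have h2 := Aa_le n v.val
        omega
      · exact absurd (Subsingleton.elim k k') hadj
  apply le_antisymm
  · exact Nat.sInf_le hmem
  · apply le_csInf ⟨2, hmem⟩
    rintro k ⟨f, hb, hne⟩
    by_contra hlt
    push_neg at hlt
    interval_cases k
    · have := hb (Sum.inr 0); omega
    · -- k = 1 : all labels are 1, vertices 1 and 2 have equal neighbor sums
      have hone : ∀ v, f v = 1 := fun v => by have := hb v; omega
      have h1n : (1 : ℕ) < n + 1 := by omega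
      have h2n : (2 : ℕ) < n + 1 := by omega
      have hadj : G.Adj (Sum.inl ⟨1, h1n⟩) (Sum.inl ⟨2, h2n⟩) := by
        show (SimpleGraph.pathGraph (n+1)).Adj _ _
        rw [SimpleGraph.pathGraph_adj]
        left; rfl
      apply hne _ _ hadj
      rw [nbrSum_inl_s9, nbrSum_inl_s9]
      simp only [hone]
      have c1 : (0:ℕ) < 1 := by omega
      have c2 : (1:ℕ) < n := by omega
      have c3 : (0:ℕ) < 2 := by omega
      have c4 : (2:ℕ) < n := by omega
      rw [dif_pos c1, dif_pos c2, dif_pos c3, dif_pos c4]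
end

section
/- Let n ≥ 4 and let W_n = C_n ∨ K₁ be the wheel on n+1 vertices. If n is even, then η(W_n) = 2; if n is odd, then η(W_n) = 3. -/
/-! ### Auxiliary machinery for the wheel -/

open Fin.CommRing

lemma no_two_coloring (n : ℕ) (hodd : Odd n) [NeZero n] (g : Fin n → ℕ)
    (hb : ∀ i, g i = 1 ∨ g i = 2)
    (ht : ∀ i : Fin n, g i + g (i + 2) ≠ g (i + 1) + g (i + 3)) : False := by
  set t : Fin n → ℕ := fun i => g i + g (i + 2) with htdef
  have ht' : ∀ i, t i ≠ t (i + 1) := by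
    intro i
    have := ht i
    simpa [htdef, add_assoc, show (i:Fin n) + 1 + 2 = i + 3 by ring] using this
  have heq : ∀ i, t i ≠ 3 → t i = 2 * g (i + 1 + 1) := by
    intro i h3
    have h1 := hb i
    have h2 := hb (i + 2)
    have : (i : Fin n) + 1 + 1 = i + 2 := by ring
    rw [this]
    simp only [htdef] at h3 ⊢
    omega
  have htr : ∀ i, t i = 2 ∨ t i = 3 ∨ t i = 4 := by
    intro i
    have h1 := hb i
    have h2 := hb (i + 2)
    simp only [htdef]
    omega
  set h : Fin n → ZMod 2 := fun i =>
    if t i = 3 then (if t (i - 1) = 4 then 0 else 1) else (if t i = 4 then 1 else 0) with hdef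
  have key : ∀ i, h (i + 1) = h i + 1 := by
    intro i
    by_cases h1 : t i = 3
    · have h2 : t (i + 1) ≠ 3 := fun hc => ht' i (h1.trans hc.symm)
      have h3 : t (i - 1) ≠ 3 := by
        have := ht' (i - 1)
        rw [show (i : Fin n) - 1 + 1 = i by ring, h1] at this
        exact this
      have e1 : t (i + 1) = t (i - 1) := by
        rw [heq _ h2, heq _ h3, show (i: Fin n) - 1 + 1 + 1 = i + 1 by ring,
          show (i : Fin n) + 1 + 1 + 1 = i + 3 by ring]
        have h4 := hb (i + 1)
        have h5 := hb (i + 3)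
        have t1 := htr (i + 1)
        have t2 : t (i+1) ≠ 3 := h2
        simp only [htdef, show (i:Fin n) + 1 + 2 = i + 3 by ring] at t2
        omega
      simp only [hdef, if_pos h1, if_neg h2, e1]
      by_cases h4 : t (i - 1) = 4
      · simp [h4]
      · simp [h4]; decide
    · by_cases h2 : t (i + 1) = 3
      · simp only [hdef, if_pos h2, if_neg h1, show (i : Fin n) + 1 - 1 = i by ring]
        by_cases h4 : t i = 4
        · simp [h4]; decide
        · simp [h4]
      · have hne := ht' i
        have t1 := htr i
        have t2 := htr (i + 1)
        have : t i = 2 ∧ t (i + 1) = 4 ∨ t i = 4 ∧ t (i + 1) = 2 := by omega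
        simp only [hdef, if_neg h1, if_neg h2]
        rcases this with ⟨e1, e2⟩ | ⟨e1, e2⟩
        · simp [e1, e2]
        · simp [e1, e2]; decide
  have h1 : ∑ i, h (i + 1) = ∑ i, h i :=
    Fintype.sum_bijective _ (Equiv.addRight (1 : Fin n)).bijective _ _ (fun x => rfl)
  simp only [key] at h1
  rw [Finset.sum_add_distrib] at h1
  simp at h1
  rw [ZMod.natCast_eq_zero_iff] at h1
  rcases hodd with ⟨k, rfl⟩
  omega

abbrev W (m : ℕ) : SimpleGraph (Fin (m+4) ⊕ Fin 1) := joinK (SimpleGraph.cycleGraph (m+4)) 1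

lemma adj_inl_inl {m : ℕ} (u v : Fin (m+4)) :
    (W m).Adj (Sum.inl u) (Sum.inl v) ↔ u - v = 1 ∨ v - u = 1 := by
  show (SimpleGraph.cycleGraph (m+2+2)).Adj u v ↔ _
  exact SimpleGraph.cycleGraph_adj

lemma adj_inl_inr {m : ℕ} (u : Fin (m+4)) (y : Fin 1) :
    (W m).Adj (Sum.inl u) (Sum.inr y) := trivial

lemma finTwoNeZero (m : ℕ) : (2 : Fin (m+4)) ≠ 0 := by
  simp [Fin.ext_iff, Nat.mod_eq_of_lt (show 2 < m+4 by omega)]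

lemma sub_one_ne_add_one {m : ℕ} (i : Fin (m+4)) : i - 1 ≠ i + 1 := by
  intro h
  have h2 : (i + 1) - (i - 1) = 2 := by ring
  rw [← h, sub_self] at h2
  exact finTwoNeZero m h2.symm

lemma nbr_inl {m : ℕ} (f : Fin (m+4) ⊕ Fin 1 → ℕ) (i : Fin (m+4)) :
    nbrSum (W m) f (Sum.inl i)
      = f (Sum.inl (i-1)) + f (Sum.inl (i+1)) + f (Sum.inr 0) := by
  classical
  have hset : (Finset.univ.filter (fun w => (W m).Adj (Sum.inl i) w))
      = {Sum.inl (i-1), Sum.inl (i+1), Sum.inr 0} := by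
    ext w
    rcases w with v | j
    · simp only [Finset.mem_filter, Finset.mem_univ, true_and, Finset.mem_insert,
        Finset.mem_singleton, adj_inl_inl]
      simp only [Sum.inl.injEq]
      constructor
      · rintro (h | h)
        · left; rw [← h]; ring
        · right; left; rw [← h]; ring
      · rintro (h | h | h)
        · left; rw [h]; ring
        · right; rw [h]; ring
        · exact absurd h (by simp)
    · simp only [Finset.mem_filter, Finset.mem_univ, true_and, Finset.mem_insert,
        Finset.mem_singleton]
      have : j = 0 := Subsingleton.elim _ _
      subst this
      simp [adj_inl_inr]
  rw [nbrSum]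
  rw [hset]
  rw [Finset.sum_insert (by
    simp only [Finset.mem_insert, Finset.mem_singleton]
    push_neg
    exact ⟨by simp [sub_one_ne_add_one i], by simp⟩)]
  rw [Finset.sum_insert (by simp)]
  rw [Finset.sum_singleton, add_assoc]

lemma nbr_inr {m : ℕ} (f : Fin (m+4) ⊕ Fin 1 → ℕ) :
    nbrSum (W m) f (Sum.inr 0) = ∑ i : Fin (m+4), f (Sum.inl i) := by
  classical
  have hset : (Finset.univ.filter (fun w => (W m).Adj (Sum.inr 0) w))
      = Finset.univ.map ⟨Sum.inl, Sum.inl_injective⟩ := by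
    ext w
    rcases w with v | j
    · simp [show (W m).Adj (Sum.inr 0) (Sum.inl v) from trivial]
    · have : j = 0 := Subsingleton.elim _ _
      subst this
      simp [show ¬ (W m).Adj (Sum.inr 0) (Sum.inr 0) from (W m).loopless.irrefl _]
  rw [nbrSum, hset, Finset.sum_map]
  rfl

lemma adj_rim {m : ℕ} (i : Fin (m+4)) : (W m).Adj (Sum.inl i) (Sum.inl (i+1)) := by
  rw [adj_inl_inl]
  right
  ring

lemma val_one' {m : ℕ} : (1 : Fin (m+4)).val = 1 := by simp
lemma val_two' {m : ℕ} : (2 : Fin (m+4)).val = 2 := by simp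

lemma val_sub_one {m : ℕ} (u : Fin (m+4)) : (u - 1).val = (m + 3 + u.val) % (m+4) := by
  simp [Fin.sub_def]

lemma val_add_one {m : ℕ} (u : Fin (m+4)) : (u + 1).val = (u.val + 1) % (m+4) := by
  simp [Fin.add_def]

lemma val_add_two {m : ℕ} (u : Fin (m+4)) : (u + 2).val = (u.val + 2) % (m+4) := by
  rw [Fin.add_def, val_two']

def gE (m : ℕ) : Fin (m+4) → ℕ := fun i => if i.val % 2 = 0 then 1 else 2
def FE (m : ℕ) : Fin (m+4) ⊕ Fin 1 → ℕ := Sum.elim (gE m) (fun _ => 1)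
def gO (m : ℕ) : Fin (m+4) → ℕ := fun i =>
  if i.val = m+3 then 3 else if i.val = m+2 then 1 else if i.val % 2 = 0 then 1 else 2
def FO (m : ℕ) : Fin (m+4) ⊕ Fin 1 → ℕ := Sum.elim (gO m) (fun _ => 1)

lemma gE_eval {m : ℕ} (x : Fin (m+4)) (j : ℕ) (hx : x.val = j) :
    gE m x = if j % 2 = 0 then 1 else 2 := by simp [gE, hx]

lemma gO_eval {m : ℕ} (x : Fin (m+4)) (j : ℕ) (hx : x.val = j) :
    gO m x = if j = m+3 then 3 else if j = m+2 then 1 else if j % 2 = 0 then 1 else 2 := by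
  simp [gO, hx]

section vals
variable {m : ℕ} (u : Fin (m+4))

lemma v1' : (u - 1).val = if u.val = 0 then m + 3 else u.val - 1 := by
  have klt := u.isLt
  rw [val_sub_one]
  split_ifs with h
  · rw [h]; exact Nat.mod_eq_of_lt (by omega)
  · rw [Nat.mod_eq_sub_mod (by omega), Nat.mod_eq_of_lt (by omega)]; omega

lemma v2' : (u + 1).val = if u.val = m + 3 then 0 else u.val + 1 := by
  have klt := u.isLt
  rw [val_add_one]
  split_ifs with h
  · rw [h]; simp
  · exact Nat.mod_eq_of_lt (by omega)

lemma v3' : (u + 2).val = if m + 2 ≤ u.val then u.val - (m + 2) else u.val + 2 := by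
  have klt := u.isLt
  rw [val_add_two]
  split_ifs with h
  · rw [Nat.mod_eq_sub_mod (by omega), Nat.mod_eq_of_lt (by omega)]; omega
  · exact Nat.mod_eq_of_lt (by omega)

end vals

lemma even_rim {m : ℕ} (hm : m % 2 = 0) (u : Fin (m+4)) :
    gE m (u-1) + gE m (u+1) ≠ gE m u + gE m (u+2) := by
  have klt := u.isLt
  rw [gE_eval (u-1) _ (v1' u), gE_eval (u+1) _ (v2' u), gE_eval u _ rfl,
    gE_eval (u+2) _ (v3' u)]
  split_ifs <;> omega

set_option maxHeartbeats 2000000 in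
lemma odd_rim {m : ℕ} (hm : m % 2 = 1) (u : Fin (m+4)) :
    gO m (u-1) + gO m (u+1) ≠ gO m u + gO m (u+2) := by
  have klt := u.isLt
  rw [gO_eval (u-1) _ (v1' u), gO_eval (u+1) _ (v2' u), gO_eval u _ rfl,
    gO_eval (u+2) _ (v3' u)]
  split_ifs <;> omega

lemma gE_le {m : ℕ} (x : Fin (m+4)) : gE m x ≤ 2 := by unfold gE; split_ifs <;> omega
lemma gE_ge {m : ℕ} (x : Fin (m+4)) : 1 ≤ gE m x := by unfold gE; split_ifs <;> omega
lemma gO_le {m : ℕ} (x : Fin (m+4)) : gO m x ≤ 3 := by unfold gO; split_ifs <;> omega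
lemma gO_ge {m : ℕ} (x : Fin (m+4)) : 1 ≤ gO m x := by unfold gO; split_ifs <;> omega
lemma gO_le_two {m : ℕ} (x : Fin (m+4)) (hx : x.val ≠ m+3) : gO m x ≤ 2 := by
  unfold gO; rw [if_neg hx]; split_ifs <;> omega

lemma even_sum_ge {m : ℕ} : 6 ≤ ∑ i : Fin (m+4), gE m i := by
  classical
  have hsub : ({⟨0, by omega⟩, ⟨1, by omega⟩, ⟨2, by omega⟩, ⟨3, by omega⟩} : Finset (Fin (m+4)))
      ⊆ Finset.univ := Finset.subset_univ _
  have hle := Finset.sum_le_sum_of_subset (f := gE m) hsub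
  rw [Finset.sum_insert (by simp [Fin.ext_iff]), Finset.sum_insert (by simp [Fin.ext_iff]),
    Finset.sum_insert (by simp [Fin.ext_iff]), Finset.sum_singleton] at hle
  have e0 : gE m ⟨0, by omega⟩ = 1 := by simp [gE]
  have e1 : gE m ⟨1, by omega⟩ = 2 := by simp [gE]
  have e2 : gE m ⟨2, by omega⟩ = 1 := by simp [gE]
  have e3 : gE m ⟨3, by omega⟩ = 2 := by simp [gE]
  omega

lemma odd_sum_ge {m : ℕ} (hm : m % 2 = 1) : 7 ≤ ∑ i : Fin (m+4), gO m i := by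
  classical
  have hsub : ({⟨0, by omega⟩, ⟨1, by omega⟩, ⟨2, by omega⟩, ⟨m+3, by omega⟩} : Finset (Fin (m+4)))
      ⊆ Finset.univ := Finset.subset_univ _
  have hle := Finset.sum_le_sum_of_subset (f := gO m) hsub
  rw [Finset.sum_insert (by simp [Fin.ext_iff]), Finset.sum_insert (by simp [Fin.ext_iff]),
    Finset.sum_insert (by simp [Fin.ext_iff]), Finset.sum_singleton] at hle
  have e0 : gO m ⟨0, by omega⟩ = 1 := by simp [gO]
  have e1 : gO m ⟨1, by omega⟩ = 2 := by simp [gO]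
  have e2 : gO m ⟨2, by omega⟩ = 1 := by simp [gO]
  have e3 : gO m ⟨m+3, by omega⟩ = 3 := by simp [gO]
  omega

lemma even_mem {m : ℕ} (hm : m % 2 = 0) : IsAdditiveColoring (W m) 2 (FE m) := by
  have rim_le : ∀ u : Fin (m+4), nbrSum (W m) (FE m) (Sum.inl u) ≤ 5 := by
    intro u
    rw [nbr_inl]
    have h1 := gE_le (u - 1)
    have h2 := gE_le (u + 1)
    simp only [FE, Sum.elim_inl, Sum.elim_inr]
    omega
  have hub_ge : 6 ≤ nbrSum (W m) (FE m) (Sum.inr 0) := by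
    rw [nbr_inr]
    simpa [FE] using even_sum_ge (m := m)
  have main : ∀ w : Fin (m+4),
      nbrSum (W m) (FE m) (Sum.inl w) ≠ nbrSum (W m) (FE m) (Sum.inl (w+1)) := by
    intro w
    rw [nbr_inl, nbr_inl, show w + 1 - 1 = w by ring, show w + 1 + 1 = w + 2 by ring]
    simp only [FE, Sum.elim_inl, Sum.elim_inr]
    have := even_rim hm w
    omega
  constructor
  · rintro (v | y)
    · have := gE_le v; have := gE_ge v
      simpa [FE] using ⟨by omega, by omega⟩
    · simp [FE]
  · rintro (u | x) (v | y) hadj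
    · rw [adj_inl_inl] at hadj
      rcases hadj with h | h
      · have huv : u = v + 1 := by rw [← h]; ring
        rw [huv]; exact (main v).symm
      · have hvu : v = u + 1 := by rw [← h]; ring
        rw [hvu]; exact main u
    · have hy : y = 0 := Subsingleton.elim _ _
      subst hy
      exact Nat.ne_of_lt (by have := rim_le u; omega)
    · have hx : x = 0 := Subsingleton.elim _ _
      subst hx
      exact Nat.ne_of_gt (by have := rim_le v; omega)
    · exact absurd (Subsingleton.elim x y) hadj

lemma odd_mem {m : ℕ} (hm : m % 2 = 1) : IsAdditiveColoring (W m) 3 (FO m) := by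
  have rim_le : ∀ u : Fin (m+4), nbrSum (W m) (FO m) (Sum.inl u) ≤ 6 := by
    intro u
    rw [nbr_inl]
    simp only [FO, Sum.elim_inl, Sum.elim_inr]
    have key : gO m (u - 1) + gO m (u + 1) ≤ 5 := by
      by_cases h : (u - 1).val = m + 3
      · have h2 : (u + 1).val ≠ m + 3 := by
          intro hc
          exact sub_one_ne_add_one u (Fin.ext (h.trans hc.symm))
        have := gO_le (u - 1)
        have := gO_le_two (u + 1) h2
        omega
      · have := gO_le_two (u - 1) h
        have := gO_le (u + 1)
        omega
    omega
  have hub_ge : 7 ≤ nbrSum (W m) (FO m) (Sum.inr 0) := by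
    rw [nbr_inr]
    simpa [FO] using odd_sum_ge hm
  have main : ∀ w : Fin (m+4),
      nbrSum (W m) (FO m) (Sum.inl w) ≠ nbrSum (W m) (FO m) (Sum.inl (w+1)) := by
    intro w
    rw [nbr_inl, nbr_inl, show w + 1 - 1 = w by ring, show w + 1 + 1 = w + 2 by ring]
    simp only [FO, Sum.elim_inl, Sum.elim_inr]
    have := odd_rim hm w
    omega
  constructor
  · rintro (v | y)
    · have := gO_le v; have := gO_ge v
      simpa [FO] using ⟨by omega, by omega⟩
    · simp [FO]
  · rintro (u | x) (v | y) hadj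
    · rw [adj_inl_inl] at hadj
      rcases hadj with h | h
      · have huv : u = v + 1 := by rw [← h]; ring
        rw [huv]; exact (main v).symm
      · have hvu : v = u + 1 := by rw [← h]; ring
        rw [hvu]; exact main u
    · have hy : y = 0 := Subsingleton.elim _ _
      subst hy
      exact Nat.ne_of_lt (by have := rim_le u; omega)
    · have hx : x = 0 := Subsingleton.elim _ _
      subst hx
      exact Nat.ne_of_gt (by have := rim_le v; omega)
    · exact absurd (Subsingleton.elim x y) hadj

/-- For `n ≥ 4`, the wheel `W_n = C_n ∨ K₁` satisfies `η(W_n) = 2` if `n` is even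
and `η(W_n) = 3` if `n` is odd. -/
theorem eta_wheel (n : ℕ) (hn : 4 ≤ n) :
    (Even n → eta (joinK (SimpleGraph.cycleGraph n) 1) = 2) ∧
    (Odd n → eta (joinK (SimpleGraph.cycleGraph n) 1) = 3) := by
  obtain ⟨m, rfl⟩ : ∃ m, n = m + 4 := ⟨n - 4, by omega⟩
  constructor
  · intro he
    have hm : m % 2 = 0 := by rcases he with ⟨k, hk⟩; omega
    have mem2 : 2 ∈ {k | ∃ f, IsAdditiveColoring (W m) k f} := ⟨FE m, even_mem hm⟩
    refine le_antisymm (Nat.sInf_le mem2) (le_csInf ⟨2, mem2⟩ ?_)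
    rintro k ⟨f, hf⟩
    by_contra hk
    push_neg at hk
    have hall : ∀ v, f v = 1 := by
      intro v
      have := hf.1 v
      omega
    have hadj01 : (W m).Adj (Sum.inl 0) (Sum.inl 1) := by
      have := adj_rim (0 : Fin (m+4))
      rwa [zero_add] at this
    exact hf.2 _ _ hadj01 (by rw [nbr_inl, nbr_inl]; simp [hall])
  · intro ho
    have hm : m % 2 = 1 := by rcases ho with ⟨k, hk⟩; omega
    have mem3 : 3 ∈ {k | ∃ f, IsAdditiveColoring (W m) k f} := ⟨FO m, odd_mem hm⟩
    refine le_antisymm (Nat.sInf_le mem3) (le_csInf ⟨3, mem3⟩ ?_)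
    rintro k ⟨f, hf⟩
    by_contra hk
    push_neg at hk
    haveI : NeZero (m + 4) := ⟨by omega⟩
    apply no_two_coloring (m + 4) ⟨(m + 3) / 2, by omega⟩ (fun i => f (Sum.inl i))
    · intro i
      have := hf.1 (Sum.inl i)
      omega
    · intro i
      have hadj := hf.2 _ _ (adj_rim (i + 1))
      rw [nbr_inl, nbr_inl, show i + 1 - 1 = i by ring, show i + 1 + 1 = i + 2 by ring,
        show i + 2 - 1 = i + 1 by ring, show i + 2 + 1 = i + 3 by ring] at hadj
      intro hc
      exact hadj (by omega)
end
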